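/- arXiv:1305.5692 — 3 statements merged into one kernel-verified Lean document; each statement's English description precedes it below -/
import Mathlib

section
/- For a nontrivial finite simple graph G, the bondage number b(G) is at most b_1(G) = min { d(x) + d(y) - 1 : x, y ∈ V(G), 1 ≤ dist(x,y) ≤ 2 }. -/
open SimpleGraph

/-- The domination number of a graph: minimum size of a dominating set. -/
noncomputable def dominationNumber {V : Type*} (G : SimpleGraph V) : ℕ :=
  sInf {n | ∃ D : Finset V, (∀ v, v ∉ D → ∃ u ∈ D, G.Adj u v) ∧ D.card = n}

/-- The bondage number: minimum number of edges whose removal increases the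
domination number. -/
noncomputable def bondageNumber {V : Type*} (G : SimpleGraph V) : ℕ :=
  sInf {n | ∃ B : Finset (Sym2 V), ↑B ⊆ G.edgeSet ∧ B.card = n ∧
    dominationNumber G < dominationNumber (G.deleteEdges ↑B)}

/-- b₁(G) = min { d(x) + d(y) - 1 : 1 ≤ dist(x,y) ≤ 2 }. -/
noncomputable def bOne {V : Type*} [Fintype V] (G : SimpleGraph V)
    [DecidableRel G.Adj] : ℕ :=
  sInf {n | ∃ x y : V, 1 ≤ G.dist x y ∧ G.dist x y ≤ 2 ∧
    n = G.degree x + G.degree y - 1}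

section aux
variable {V : Type*} [Fintype V]

lemma domSet_nonempty (G : SimpleGraph V) :
    {n | ∃ D : Finset V, (∀ v, v ∉ D → ∃ u ∈ D, G.Adj u v) ∧ D.card = n}.Nonempty :=
  ⟨Finset.univ.card, Finset.univ, fun v hv => absurd (Finset.mem_univ v) hv, rfl⟩

lemma dom_le (G : SimpleGraph V) (D : Finset V)
    (hD : ∀ v, v ∉ D → ∃ u ∈ D, G.Adj u v) :
    dominationNumber G ≤ D.card :=
  Nat.sInf_le ⟨D, hD, rfl⟩

lemma exists_min_dom (G : SimpleGraph V) :
    ∃ D : Finset V, (∀ v, v ∉ D → ∃ u ∈ D, G.Adj u v) ∧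
      D.card = dominationNumber G :=
  Nat.sInf_mem (domSet_nonempty G)

/-- Case dist = 1: if `x` and `y` are adjacent in `G` and both isolated in `G'`
(a spanning subgraph of `G`), then γ(G) < γ(G'). -/
lemma dom_lt_of_two_isolated (G G' : SimpleGraph V) (hle : G' ≤ G) (x y : V)
    (hxy : G.Adj x y)
    (hx : ∀ v, ¬ G'.Adj x v) (hy : ∀ v, ¬ G'.Adj y v) :
    dominationNumber G < dominationNumber G' := by
  classical
  obtain ⟨D, hD, hcard⟩ := exists_min_dom G'
  have hxD : x ∈ D := by
    by_contra h
    obtain ⟨u, _, hu⟩ := hD x h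
    exact hx u hu.symm
  have hyD : y ∈ D := by
    by_contra h
    obtain ⟨u, _, hu⟩ := hD y h
    exact hy u hu.symm
  have hdom : ∀ v, v ∉ D.erase y → ∃ u ∈ D.erase y, G.Adj u v := by
    intro v hv
    by_cases hvy : v = y
    · subst hvy
      exact ⟨x, Finset.mem_erase.2 ⟨hxy.ne, hxD⟩, hxy⟩
    · have hvD : v ∉ D := fun h => hv (Finset.mem_erase.2 ⟨hvy, h⟩)
      obtain ⟨u, huD, hu⟩ := hD v hvD
      have huy : u ≠ y := fun h => hy v (h ▸ hu)
      exact ⟨u, Finset.mem_erase.2 ⟨huy, huD⟩, hle hu⟩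
  calc dominationNumber G ≤ (D.erase y).card := dom_le G _ hdom
    _ < D.card := Finset.card_erase_lt_of_mem hyD
    _ = dominationNumber G' := hcard

/-- Case dist = 2: `z` is a common neighbor of `x` and `y` in `G`; in `G'`,
`x` is isolated and the only possible neighbor of `y` is `z`. Then γ(G) < γ(G'). -/
lemma dom_lt_of_dist_two (G G' : SimpleGraph V) (hle : G' ≤ G) (x y z : V)
    (hxy : x ≠ y) (hzx : G.Adj z x) (hzy : G.Adj z y)
    (hx : ∀ v, ¬ G'.Adj x v) (hy : ∀ v, G'.Adj y v → v = z) :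
    dominationNumber G < dominationNumber G' := by
  classical
  obtain ⟨D, hD, hcard⟩ := exists_min_dom G'
  have hxD : x ∈ D := by
    by_contra h
    obtain ⟨u, _, hu⟩ := hD x h
    exact hx u hu.symm
  by_cases hzD : z ∈ D
  · -- use D.erase x
    have hdom : ∀ v, v ∉ D.erase x → ∃ u ∈ D.erase x, G.Adj u v := by
      intro v hv
      by_cases hvx : v = x
      · subst hvx
        exact ⟨z, Finset.mem_erase.2 ⟨hzx.ne, hzD⟩, hzx⟩
      · have hvD : v ∉ D := fun h => hv (Finset.mem_erase.2 ⟨hvx, h⟩)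
        obtain ⟨u, huD, hu⟩ := hD v hvD
        have hux : u ≠ x := fun h => hx v (h ▸ hu)
        exact ⟨u, Finset.mem_erase.2 ⟨hux, huD⟩, hle hu⟩
    calc dominationNumber G ≤ (D.erase x).card := dom_le G _ hdom
      _ < D.card := Finset.card_erase_lt_of_mem hxD
      _ = dominationNumber G' := hcard
  · -- z ∉ D, so y ∈ D
    have hyD : y ∈ D := by
      by_contra h
      obtain ⟨u, huD, hu⟩ := hD y h
      have : u = z := hy u hu.symm
      exact hzD (this ▸ huD)
    set D' : Finset V := insert z ((D.erase x).erase y) with hD'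
    have hdom : ∀ v, v ∉ D' → ∃ u ∈ D', G.Adj u v := by
      intro v hv
      have hzD' : z ∈ D' := Finset.mem_insert_self _ _
      by_cases hvx : v = x
      · exact ⟨z, hzD', hvx ▸ hzx⟩
      by_cases hvy : v = y
      · exact ⟨z, hzD', hvy ▸ hzy⟩
      have hvD : v ∉ D := fun h =>
        hv (Finset.mem_insert_of_mem (Finset.mem_erase.2 ⟨hvy, Finset.mem_erase.2 ⟨hvx, h⟩⟩))
      obtain ⟨u, huD, hu⟩ := hD v hvD
      have hux : u ≠ x := fun h => hx v (h ▸ hu)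
      have huy : u ≠ y := by
        intro h
        have : v = z := hy v (h ▸ hu)
        exact hv (this ▸ hzD')
      exact ⟨u, Finset.mem_insert_of_mem
        (Finset.mem_erase.2 ⟨huy, Finset.mem_erase.2 ⟨hux, huD⟩⟩), hle hu⟩
    have hzne : z ∉ (D.erase x).erase y := fun h =>
      hzD (Finset.mem_of_mem_erase (Finset.mem_of_mem_erase h))
    have hcard' : D'.card < D.card := by
      rw [hD', Finset.card_insert_of_notMem hzne,
        Finset.card_erase_of_mem (Finset.mem_erase.2 ⟨hxy.symm, hyD⟩),
        Finset.card_erase_of_mem hxD]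
      have h1 : 1 ≤ D.card := Finset.card_pos.2 ⟨x, hxD⟩
      have h2 : 2 ≤ D.card := by
        have := Finset.one_lt_card.2 ⟨x, hxD, y, hyD, hxy⟩
        omega
      omega
    calc dominationNumber G ≤ D'.card := dom_le G _ hdom
      _ < D.card := hcard'
      _ = dominationNumber G' := hcard

end aux

theorem bondage_le_bOne {V : Type*} [Fintype V] (G : SimpleGraph V)
    [DecidableRel G.Adj] (hG : G.edgeSet.Nonempty) :
    bondageNumber G ≤ bOne G := by
  classical
  -- the defining set of bOne is nonempty
  obtain ⟨e, he⟩ := hG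
  induction e with
  | h a b =>
  rw [SimpleGraph.mem_edgeSet] at he
  have hne : {n | ∃ x y : V, 1 ≤ G.dist x y ∧ G.dist x y ≤ 2 ∧
      n = G.degree x + G.degree y - 1}.Nonempty := by
    have hd : G.dist a b = 1 := SimpleGraph.dist_eq_one_iff_adj.2 he
    exact ⟨G.degree a + G.degree b - 1, a, b, by omega, by omega, rfl⟩
  refine le_csInf hne ?_
  rintro n ⟨x, y, h1, h2, hn⟩
  -- build a bondage set B with card ≤ n
  suffices h : ∃ B : Finset (Sym2 V), ↑B ⊆ G.edgeSet ∧ B.card ≤ n ∧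
      dominationNumber G < dominationNumber (G.deleteEdges ↑B) by
    obtain ⟨B, hBsub, hBcard, hBdom⟩ := h
    exact le_trans (Nat.sInf_le ⟨B, hBsub, rfl, hBdom⟩) hBcard
  interval_cases hdist : G.dist x y
  · -- dist = 1 : adjacent
    have hxy : G.Adj x y := SimpleGraph.dist_eq_one_iff_adj.1 hdist
    refine ⟨G.incidenceFinset x ∪ G.incidenceFinset y, ?_, ?_, ?_⟩
    · intro e heB
      simp only [Finset.coe_union, Set.mem_union, Finset.mem_coe,
        SimpleGraph.mem_incidenceFinset] at heB
      rcases heB with h | h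
      · exact h.1
      · exact h.1
    · have hmem : s(x, y) ∈ G.incidenceFinset x ∩ G.incidenceFinset y := by
        simp [SimpleGraph.mem_incidenceFinset, SimpleGraph.incidenceSet, he, hxy]
      have h1 : 1 ≤ (G.incidenceFinset x ∩ G.incidenceFinset y).card :=
        Finset.card_pos.2 ⟨_, hmem⟩
      have h2 := Finset.card_union_add_card_inter (G.incidenceFinset x) (G.incidenceFinset y)
      rw [G.card_incidenceFinset_eq_degree, G.card_incidenceFinset_eq_degree] at h2
      omega
    · apply dom_lt_of_two_isolated G _ (SimpleGraph.deleteEdges_le _) x y hxy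
      · intro v hv
        rw [SimpleGraph.deleteEdges_adj] at hv
        refine hv.2 ?_
        simp only [Finset.coe_union, Set.mem_union, Finset.mem_coe,
          SimpleGraph.mem_incidenceFinset]
        exact Or.inl ⟨(SimpleGraph.mem_edgeSet G).2 hv.1, Sym2.mem_mk_left _ _⟩
      · intro v hv
        rw [SimpleGraph.deleteEdges_adj] at hv
        refine hv.2 ?_
        simp only [Finset.coe_union, Set.mem_union, Finset.mem_coe,
          SimpleGraph.mem_incidenceFinset]
        exact Or.inr ⟨(SimpleGraph.mem_edgeSet G).2 hv.1, Sym2.mem_mk_left _ _⟩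
  · -- dist = 2 : common neighbor
    obtain ⟨p, hp⟩ := SimpleGraph.exists_walk_of_dist_ne_zero (by omega : G.dist x y ≠ 0)
    rw [hdist] at hp
    -- extract the middle vertex
    obtain ⟨z, hxz, hzy⟩ : ∃ z, G.Adj x z ∧ G.Adj z y := by
      cases p with
      | nil => simp at hp
      | cons h q =>
        cases q with
        | nil => simp at hp
        | cons h' q' =>
          cases q' with
          | nil => exact ⟨_, h, h'⟩
          | cons h'' q'' => simp [SimpleGraph.Walk.length_cons] at hp
    have hxy : x ≠ y := by
      intro h; subst h; simp [SimpleGraph.dist_self] at hdist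
    refine ⟨G.incidenceFinset x ∪ (G.incidenceFinset y).erase s(y, z), ?_, ?_, ?_⟩
    · intro e heB
      simp only [Finset.coe_union, Set.mem_union, Finset.mem_coe, Finset.mem_erase,
        SimpleGraph.mem_incidenceFinset] at heB
      rcases heB with h | h
      · exact h.1
      · exact h.2.1
    · have hmem : s(y, z) ∈ G.incidenceFinset y := by
        simp [SimpleGraph.mem_incidenceFinset, SimpleGraph.incidenceSet, hzy.symm]
      have h1 : 1 ≤ (G.incidenceFinset y).card := Finset.card_pos.2 ⟨_, hmem⟩
      have h2 := Finset.card_union_le (G.incidenceFinset x) ((G.incidenceFinset y).erase s(y, z))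
      rw [Finset.card_erase_of_mem hmem] at h2
      rw [G.card_incidenceFinset_eq_degree] at h2 h1
      rw [G.card_incidenceFinset_eq_degree] at h2
      omega
    · apply dom_lt_of_dist_two G _ (SimpleGraph.deleteEdges_le _) x y z hxy hxz.symm hzy
      · intro v hv
        rw [SimpleGraph.deleteEdges_adj] at hv
        refine hv.2 ?_
        simp only [Finset.coe_union, Set.mem_union, Finset.mem_coe, Finset.mem_erase,
          SimpleGraph.mem_incidenceFinset]
        exact Or.inl ⟨(SimpleGraph.mem_edgeSet G).2 hv.1, Sym2.mem_mk_left _ _⟩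
      · intro v hv
        rw [SimpleGraph.deleteEdges_adj] at hv
        by_contra hvz
        refine hv.2 ?_
        simp only [Finset.coe_union, Set.mem_union, Finset.mem_coe, Finset.mem_erase,
          SimpleGraph.mem_incidenceFinset]
        refine Or.inr ⟨?_, (SimpleGraph.mem_edgeSet G).2 hv.1, Sym2.mem_mk_left _ _⟩
        intro h
        exact hvz (Sym2.congr_right.1 h)
end

section
/- For a nontrivial finite simple graph G, the bondage number b(G) is at most b_2(G) = min { d(x) + d(y) - 1 - |N(x) ∩ N(y)| : xy ∈ E(G) }. -/
open SimpleGraph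

/-- b₂(G) = min over edges xy of d(x) + d(y) - 1 - |N(x) ∩ N(y)|. -/
noncomputable def bTwo {V : Type*} [Fintype V] [DecidableEq V] (G : SimpleGraph V)
    [DecidableRel G.Adj] : ℕ :=
  sInf {n | ∃ x y : V, G.Adj x y ∧
    n = G.degree x + G.degree y - 1 - (G.neighborFinset x ∩ G.neighborFinset y).card}

/-- The domination number is attained. -/
lemma dominationNumber_mem {V : Type*} [Fintype V] (G : SimpleGraph V) :
    dominationNumber G ∈
      {n | ∃ D : Finset V, (∀ v, v ∉ D → ∃ u ∈ D, G.Adj u v) ∧ D.card = n} :=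
  Nat.sInf_mem ⟨(Finset.univ : Finset V).card, Finset.univ, by simp, rfl⟩

/-- If every edge at `x` is deleted, and every surviving edge at `y` goes to a
neighbor of `x`, then the domination number strictly increases. -/
lemma dominationNumber_lt_deleteEdges {V : Type*} [Fintype V] [DecidableEq V]
    (G : SimpleGraph V) [DecidableRel G.Adj] (x y : V) (hxy : G.Adj x y)
    (B : Finset (Sym2 V))
    (hBx : ∀ u, G.Adj u x → s(u, x) ∈ B)
    (hBy : ∀ u, G.Adj u y → s(u, y) ∉ B → G.Adj u x) :
    dominationNumber G < dominationNumber (G.deleteEdges ↑B) := by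
  set G' := G.deleteEdges ↑B with hG'
  have hiso : ∀ u, ¬ G'.Adj u x := by
    intro u hu
    rw [hG', deleteEdges_adj] at hu
    exact hu.2 (hBx u hu.1)
  by_contra hle
  push_neg at hle
  obtain ⟨D, hD, hcard⟩ := dominationNumber_mem G'
  have hxD : x ∈ D := by
    by_contra hx
    obtain ⟨u, _, hu⟩ := hD x hx
    exact hiso u hu
  have hdom : ∀ v, v ∉ D.erase x → ∃ u ∈ D.erase x, G.Adj u v := by
    intro v hv
    by_cases hvx : v = x
    · rw [hvx]
      by_cases hy : y ∈ D
      · exact ⟨y, Finset.mem_erase.2 ⟨hxy.symm.ne, hy⟩, hxy.symm⟩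
      · obtain ⟨u, huD, hu⟩ := hD y hy
        rw [hG', deleteEdges_adj] at hu
        have hux : G.Adj u x := hBy u hu.1 (by simpa using hu.2)
        exact ⟨u, Finset.mem_erase.2 ⟨hux.ne, huD⟩, hux⟩
    · have hvD : v ∉ D := fun h => hv (Finset.mem_erase.2 ⟨hvx, h⟩)
      obtain ⟨u, huD, hu⟩ := hD v hvD
      have hux : u ≠ x := by
        rintro rfl
        exact hiso v hu.symm
      exact ⟨u, Finset.mem_erase.2 ⟨hux, huD⟩, (deleteEdges_adj.1 hu).1⟩
  have hγ : dominationNumber G ≤ (D.erase x).card :=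
    Nat.sInf_le ⟨D.erase x, hdom, rfl⟩
  rw [Finset.card_erase_of_mem hxD, hcard] at hγ
  have hpos : 0 < dominationNumber G' := by
    rw [← hcard]; exact Finset.card_pos.2 ⟨x, hxD⟩
  omega

theorem bondage_le_bTwo {V : Type*} [Fintype V] [DecidableEq V] (G : SimpleGraph V)
    [DecidableRel G.Adj] (hG : G.edgeSet.Nonempty) :
    bondageNumber G ≤ bTwo G := by
  classical
  have hne : ∃ a b : V, G.Adj a b := by
    obtain ⟨e, he⟩ := hG
    induction e using Sym2.ind with
    | _ a b => exact ⟨a, b, he⟩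
  obtain ⟨a, b, hab⟩ := hne
  obtain ⟨x, y, hxy, hm⟩ : bTwo G ∈ {n | ∃ x y : V, G.Adj x y ∧
      n = G.degree x + G.degree y - 1
        - (G.neighborFinset x ∩ G.neighborFinset y).card} :=
    Nat.sInf_mem ⟨_, a, b, hab, rfl⟩
  set B : Finset (Sym2 V) :=
    G.incidenceFinset x ∪ (G.neighborFinset y \ insert x (G.neighborFinset x)).image
      (fun z => s(y,z)) with hB
  have hsub : ↑B ⊆ G.edgeSet := by
    intro e he
    simp only [hB, Finset.coe_union, Set.mem_union, Finset.mem_coe,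
      mem_incidenceFinset, Finset.mem_image] at he
    rcases he with h | ⟨z, hz, rfl⟩
    · exact h.1
    · simp only [Finset.mem_sdiff, mem_neighborFinset] at hz
      exact hz.1
  have hcard : B.card = G.degree x + G.degree y - 1
      - (G.neighborFinset x ∩ G.neighborFinset y).card := by
    have hdisj : Disjoint (G.incidenceFinset x)
        ((G.neighborFinset y \ insert x (G.neighborFinset x)).image (fun z => s(y,z))) := by
      rw [Finset.disjoint_left]
      rintro e he h2
      simp only [Finset.mem_image, Finset.mem_sdiff, Finset.mem_insert] at h2
      obtain ⟨z, ⟨hz1, hz2⟩, rfl⟩ := h2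
      rw [mem_incidenceFinset] at he
      have hx : x ∈ s(y, z) := he.2
      rcases Sym2.mem_iff.1 hx with rfl | rfl
      · exact hxy.ne rfl
      · exact hz2 (Or.inl rfl)
    rw [Finset.card_union_of_disjoint hdisj, G.card_incidenceFinset_eq_degree,
      Finset.card_image_of_injective _ (fun c d h => by
        rcases Sym2.eq_iff.mp h with ⟨_, h2⟩ | ⟨h1, h2⟩
        · exact h2
        · exact h2.trans h1)]
    have hins : G.neighborFinset y ∩ insert x (G.neighborFinset x)
        = insert x (G.neighborFinset y ∩ G.neighborFinset x) := by
      ext c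
      simp only [Finset.mem_inter, Finset.mem_insert, mem_neighborFinset]
      constructor
      · rintro ⟨h1, rfl | h2⟩
        · exact Or.inl rfl
        · exact Or.inr ⟨h1, h2⟩
      · rintro (rfl | ⟨h1, h2⟩)
        · exact ⟨hxy.symm, Or.inl rfl⟩
        · exact ⟨h1, Or.inr h2⟩
    have hxnot : x ∉ G.neighborFinset y ∩ G.neighborFinset x := by
      simp [mem_neighborFinset]
    have h1 : (G.neighborFinset y \ insert x (G.neighborFinset x)).card
        + (G.neighborFinset y ∩ insert x (G.neighborFinset x)).card
        = (G.neighborFinset y).card := Finset.card_sdiff_add_card_inter _ _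
    rw [hins, Finset.card_insert_of_notMem hxnot] at h1
    have hcomm : (G.neighborFinset x ∩ G.neighborFinset y).card
        = (G.neighborFinset y ∩ G.neighborFinset x).card := by rw [Finset.inter_comm]
    simp only [SimpleGraph.degree]
    omega
  have hBx : ∀ u, G.Adj u x → s(u, x) ∈ B := by
    intro u hu
    apply Finset.mem_union_left
    rw [mem_incidenceFinset]
    exact ⟨hu, Sym2.mem_mk_right u x⟩
  have hBy : ∀ u, G.Adj u y → s(u, y) ∉ B → G.Adj u x := by
    intro u hu hnB
    have hune : u ≠ x := by
      intro h
      apply hnB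
      rw [h]
      exact Finset.mem_union_left _ (by
        rw [mem_incidenceFinset]
        exact ⟨hxy, Sym2.mem_mk_left x y⟩)
    by_contra hux
    apply hnB
    apply Finset.mem_union_right
    rw [Sym2.eq_swap]
    apply Finset.mem_image_of_mem
    simp only [Finset.mem_sdiff, mem_neighborFinset, Finset.mem_insert]
    refine ⟨hu.symm, ?_⟩
    rintro (rfl | h)
    · exact hune rfl
    · exact hux h.symm
  have hlt := dominationNumber_lt_deleteEdges G x y hxy B hBx hBy
  exact Nat.sInf_le ⟨B, hsub, hcard.trans hm.symm, hlt⟩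
end

section
/- If G is a connected finite simple graph with n ≥ 2 vertices, then the domination number satisfies γ(G) ≤ n/2. -/
open SimpleGraph

lemma exists_adj_dist_pred {V : Type*} (G : SimpleGraph V) (hconn : G.Connected)
    (r v : V) (h : v ≠ r) : ∃ u, G.Adj u v ∧ G.dist r u + 1 = G.dist r v := by
  obtain ⟨p, hp⟩ := (hconn r v).exists_walk_length_eq_dist
  have hpos : 0 < G.dist r v := hconn.pos_dist_of_ne (Ne.symm h)
  have hrl : p.reverse.length = G.dist r v := by rw [SimpleGraph.Walk.length_reverse, hp]
  cases hq : p.reverse with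
  | nil => rw [hq] at hrl; simp at hrl; exact absurd rfl h
  | @cons _ u _ h' q' =>
    refine ⟨u, h'.symm, ?_⟩
    have hlen : q'.length + 1 = G.dist r v := by
      rw [← hrl, hq]; simp
    have h1 : G.dist r u ≤ q'.length := by
      have := G.dist_le q'.reverse
      simpa using this
    have h2 : G.dist r v ≤ G.dist r u + 1 := by
      have := hconn.dist_triangle (u := r) (v := u) (w := v)
      rwa [(G.dist_eq_one_iff_adj).mpr h'.symm] at this
    omega

/-- Ore's theorem: a connected graph on `n ≥ 2` vertices has domination
number at most `n/2`. -/
theorem ore_domination {V : Type*} [Fintype V] (G : SimpleGraph V)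
    (hconn : G.Connected) (hn : 2 ≤ Fintype.card V) :
    (dominationNumber G : ℝ) ≤ (Fintype.card V : ℝ) / 2 := by
  classical
  have hne : Nonempty V := Fintype.card_pos_iff.mp (by omega)
  obtain ⟨r⟩ := hne
  set A : Finset V := Finset.univ.filter (fun v => Even (G.dist r v)) with hA
  set B : Finset V := Finset.univ.filter (fun v => ¬ Even (G.dist r v)) with hB
  -- A is dominating
  have hAdom : ∀ v, v ∉ A → ∃ u ∈ A, G.Adj u v := by
    intro v hv
    have hodd : ¬ Even (G.dist r v) := by simpa [hA] using hv
    have hvr : v ≠ r := by rintro rfl; simp [G.dist_self] at hodd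
    obtain ⟨u, hadj, hd⟩ := exists_adj_dist_pred G hconn r v hvr
    refine ⟨u, ?_, hadj⟩
    simp only [hA, Finset.mem_filter, Finset.mem_univ, true_and]
    rcases Nat.even_or_odd (G.dist r u) with he | ho
    · exact he
    · exact absurd (hd ▸ ho.add_one) hodd
  -- B is dominating
  have hBdom : ∀ v, v ∉ B → ∃ u ∈ B, G.Adj u v := by
    intro v hv
    have heven : Even (G.dist r v) := by
      by_contra hc
      exact hv (by simp only [hB, Finset.mem_filter, Finset.mem_univ, true_and]; exact hc)
    by_cases hvr : v = r
    · subst hvr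
      obtain ⟨w, hw⟩ : ∃ w, w ≠ v := by
        have := Fintype.exists_ne_of_one_lt_card (by omega) v
        exact this
      obtain ⟨p⟩ := hconn v w
      cases p with
      | nil => exact absurd rfl hw
      | @cons _ u _ h' q' =>
        refine ⟨u, ?_, h'.symm⟩
        have : G.dist v u = 1 := dist_eq_one_iff_adj.mpr h'
        simp [hB, this]
    · obtain ⟨u, hadj, hd⟩ := exists_adj_dist_pred G hconn r v hvr
      refine ⟨u, ?_, hadj⟩
      simp only [hB, Finset.mem_filter, Finset.mem_univ, true_and]
      intro he
      rw [← hd] at heven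
      rcases heven with ⟨k, hk⟩
      rcases he with ⟨m, hm⟩
      omega
  have hAle : dominationNumber G ≤ A.card := Nat.sInf_le ⟨A, hAdom, rfl⟩
  have hBle : dominationNumber G ≤ B.card := Nat.sInf_le ⟨B, hBdom, rfl⟩
  have hsum : A.card + B.card = Fintype.card V := by
    rw [hA, hB, Finset.card_filter_add_card_filter_not]
    exact Finset.card_univ
  have : 2 * dominationNumber G ≤ Fintype.card V := by omega
  have h2 : (2 * dominationNumber G : ℝ) ≤ (Fintype.card V : ℝ) := by exact_mod_cast this
  linarith
end
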